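/- Let n̄ > 0 be a real number and define t_k = n̄^k/(1+n̄)^{k+1} for k ∈ ℕ. Then ∑_{k=0}^∞ (k+1)·t_k·t_{k+1} · ∫₀¹ (s·t_k + (1−s))⁻² ds = n̄, and consequently (2/n̄²)·∑_{k=0}^∞ (k+1)·t_k·t_{k+1}·∫₀¹ (s·t_k+(1−s))⁻² ds − (2/n̄)·∑_{k=0}^∞ t_k²·∫₀¹ (s·t_k+(1−s))⁻² ds = 0. -/

import Mathlib

lemma integral_aux (t : ℝ) (h0 : 0 < t) (h1 : t < 1) :
    ∫ s in (0:ℝ)..1, ((s * t + (1 - s)) ^ 2)⁻¹ = 1 / t := by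
  have hpos : ∀ s ∈ Set.uIcc (0:ℝ) 1, 0 < s * t + (1 - s) := by
    intro s hs
    rw [Set.uIcc_of_le (by norm_num)] at hs
    obtain ⟨hs0, hs1⟩ := hs
    nlinarith
  have hderiv : ∀ s ∈ Set.uIcc (0:ℝ) 1,
      HasDerivAt (fun s : ℝ => (1 / (1 - t)) * (s * t + (1 - s))⁻¹)
        (((s * t + (1 - s)) ^ 2)⁻¹) s := by
    intro s hs
    have hne : s * t + (1 - s) ≠ 0 := (hpos s hs).ne'
    have hg : HasDerivAt (fun s : ℝ => s * t + (1 - s)) (t - 1) s := by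
      have h := ((hasDerivAt_id' s).mul_const t).add
        ((hasDerivAt_const s (1:ℝ)).sub (hasDerivAt_id' s))
      exact h.congr_deriv (by ring)
    have hne1 : (1:ℝ) - t ≠ 0 := by linarith
    have := ((hg.inv hne).const_mul (1 / (1 - t)))
    refine this.congr_deriv ?_
    field_simp
    ring
  have hcont : ContinuousOn (fun s : ℝ => ((s * t + (1 - s)) ^ 2)⁻¹)
      (Set.uIcc 0 1) := by
    apply ContinuousOn.inv₀
    · fun_prop
    · intro s hs
      exact pow_ne_zero 2 (hpos s hs).ne'
  rw [intervalIntegral.integral_eq_sub_of_hasDerivAt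
    (fun s hs => hderiv s hs) (hcont.intervalIntegrable)]
  have hne1 : (1:ℝ) - t ≠ 0 := by linarith
  norm_num
  field_simp

/-- Scalar content of the cancellation of the two traces in the second-order Taylor
term of the QPSK quantum relative entropy (`Tr[d²K̂_q/du²|₀] = 0`) for a thermal state
with Fock eigenvalues `t_k = n̄^k/(1+n̄)^{k+1}`. -/
theorem qpsk_second_order_cancellation (n : ℝ) (hn : 0 < n)
    (t : ℕ → ℝ) (ht : ∀ k, t k = n ^ k / (1 + n) ^ (k + 1)) :
    (∑' k : ℕ, ((k : ℝ) + 1) * t k * t (k + 1) *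
        ∫ s in (0:ℝ)..1, ((s * t k + (1 - s)) ^ 2)⁻¹ = n) ∧
    ((2 / n ^ 2) * ∑' k : ℕ, ((k : ℝ) + 1) * t k * t (k + 1) *
        (∫ s in (0:ℝ)..1, ((s * t k + (1 - s)) ^ 2)⁻¹) -
      (2 / n) * ∑' k : ℕ, t k ^ 2 *
        (∫ s in (0:ℝ)..1, ((s * t k + (1 - s)) ^ 2)⁻¹) = 0) := by
  set x : ℝ := n / (1 + n) with hx
  have h1n : (0:ℝ) < 1 + n := by linarith
  have hx0 : 0 < x := div_pos hn h1n
  have hx1 : x < 1 := by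
    rw [hx, div_lt_one h1n]; linarith
  have htx : ∀ k, t k = x ^ k / (1 + n) := by
    intro k
    rw [ht k, hx, div_pow, pow_succ]
    field_simp
  have ht0 : ∀ k, 0 < t k := by
    intro k; rw [htx k]; positivity
  have ht1 : ∀ k, t k < 1 := by
    intro k
    rw [htx k, div_lt_one h1n]
    calc x ^ k ≤ 1 := pow_le_one₀ hx0.le hx1.le
    _ < 1 + n := by linarith
  have hint : ∀ k, (∫ s in (0:ℝ)..1, ((s * t k + (1 - s)) ^ 2)⁻¹) = 1 / t k :=
    fun k => integral_aux (t k) (ht0 k) (ht1 k)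
  -- first sum
  have hsum1 : ∑' k : ℕ, ((k : ℝ) + 1) * t k * t (k + 1) *
      ∫ s in (0:ℝ)..1, ((s * t k + (1 - s)) ^ 2)⁻¹ = n := by
    have hterm : ∀ k : ℕ, ((k : ℝ) + 1) * t k * t (k + 1) *
        (∫ s in (0:ℝ)..1, ((s * t k + (1 - s)) ^ 2)⁻¹)
        = ((k : ℝ) + 1) * x ^ (k + 1) / (1 + n) := by
      intro k
      rw [hint k, htx (k+1)]
      have := (ht0 k).ne'
      field_simp
    rw [tsum_congr hterm]
    have hnorm : ‖x‖ < 1 := by rw [Real.norm_eq_abs, abs_of_pos hx0]; exact hx1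
    have hgeom : ∑' m : ℕ, (m : ℝ) * x ^ m = x / (1 - x) ^ 2 :=
      tsum_coe_mul_geometric_of_norm_lt_one hnorm
    have hsummable : Summable (fun m : ℕ => (m : ℝ) * x ^ m) :=
      (hasSum_coe_mul_geometric_of_norm_lt_one hnorm).summable
    have hshift : ∑' k : ℕ, ((k : ℝ) + 1) * x ^ (k + 1) = x / (1 - x) ^ 2 := by
      rw [← hgeom, hsummable.tsum_eq_zero_add]
      push_cast
      simp
    calc ∑' k : ℕ, ((k : ℝ) + 1) * x ^ (k + 1) / (1 + n)
        = (∑' k : ℕ, ((k : ℝ) + 1) * x ^ (k + 1)) / (1 + n) := by rw [tsum_div_const]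
      _ = (x / (1 - x) ^ 2) / (1 + n) := by rw [hshift]
      _ = n := by
          rw [hx]
          have : (1 : ℝ) - n / (1 + n) = 1 / (1 + n) := by field_simp; ring
          rw [this]
          field_simp
  have hsum2 : ∑' k : ℕ, t k ^ 2 *
      (∫ s in (0:ℝ)..1, ((s * t k + (1 - s)) ^ 2)⁻¹) = 1 := by
    have hterm : ∀ k : ℕ, t k ^ 2 *
        (∫ s in (0:ℝ)..1, ((s * t k + (1 - s)) ^ 2)⁻¹) = x ^ k / (1 + n) := by
      intro k
      rw [hint k, htx k]
      have h := (ht0 k).ne'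
      rw [htx k] at h
      field_simp
    rw [tsum_congr hterm]
    rw [tsum_div_const, tsum_geometric_of_lt_one hx0.le hx1]
    rw [hx]
    have : (1 : ℝ) - n / (1 + n) = 1 / (1 + n) := by field_simp; ring
    rw [this]
    field_simp
  refine ⟨hsum1, ?_⟩
  rw [hsum1, hsum2]
  field_simp
  ring
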